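/- Fix λ ≥ 0 and a natural number i. Then λ·g(j,λ,{i}) ≥ 0 for all natural numbers j > i; the map j ↦ λ·g(j,λ,{i}) is decreasing for j > i, i.e. λ·g(j+1,λ,{i}) ≤ λ·g(j,λ,{i}) for all j > i; and for every natural number j ≥ 1 one has λ·g(j,λ,{j−1}) = 1 − Po({0,…,j−1};λ). -/

import Mathlib

open scoped BigOperators

/-- Poisson pmf: Po(k;lam) = lam^k * e^(-lam) / k!  (with the convention 0^0 = 1). -/
noncomputable def Po (k : ℕ) (lam : ℝ) : ℝ := lam ^ k * Real.exp (-lam) / (Nat.factorial k)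

/-- Poisson measure of a set A of naturals: Po(A;lam) = sum over k in A of Po(k;lam). -/
noncomputable def PoSet (A : Set ℕ) (lam : ℝ) : ℝ := ∑' k : A, Po k lam

/-- The scalar Stein-Chen solution g(j,lam,A), defined recursively by g(0,lam,A) = 0 and
g(j,lam,A) = lam⁻¹ * ((j-1)*g(j-1,lam,A) + 1_A(j-1) - Po(A;lam))
             + (1/j) * 1_{lam=0} * (1_A(0) - 1_A(j)) for j ≥ 1,
with the convention 0⁻¹ = 0. -/
noncomputable def steinChen : ℕ → ℝ → Set ℕ → ℝ
  | 0, _, _ => 0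
  | (j + 1), lam, A =>
      lam⁻¹ * ((j : ℝ) * steinChen j lam A
          + A.indicator (fun _ => (1 : ℝ)) j - PoSet A lam)
        + (1 / ((j : ℝ) + 1)) * (if lam = 0 then (1 : ℝ) else 0)
          * (A.indicator (fun _ => (1 : ℝ)) 0 - A.indicator (fun _ => (1 : ℝ)) (j + 1))

lemma Po_def' (k : ℕ) (lam : ℝ) :
    Po k lam = lam ^ k / (Nat.factorial k) * Real.exp (-lam) := by
  rw [Po]; ring

lemma Po_nonneg {lam : ℝ} (hlam : 0 ≤ lam) (k : ℕ) : 0 ≤ Po k lam := by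
  rw [Po]; positivity

lemma summable_Po (lam : ℝ) : Summable (fun k => Po k lam) := by
  have h := (Real.summable_pow_div_factorial lam).mul_right (Real.exp (-lam))
  refine h.congr fun k => ?_
  rw [Po_def']

lemma tsum_Po (lam : ℝ) : ∑' k : ℕ, Po k lam = 1 := by
  calc ∑' k : ℕ, Po k lam
      = (∑' k : ℕ, lam ^ k / (Nat.factorial k)) * Real.exp (-lam) := by
        rw [← tsum_mul_right]; exact tsum_congr fun k => Po_def' k lam
    _ = Real.exp lam * Real.exp (-lam) := by
        rw [Real.exp_eq_exp_ℝ, NormedSpace.exp_eq_tsum_div]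
    _ = 1 := by rw [← Real.exp_add]; simp

lemma tail_Po (lam : ℝ) (n : ℕ) :
    ∑' k : ℕ, Po (k + n) lam = 1 - ∑ r ∈ Finset.range n, Po r lam := by
  have h := Summable.sum_add_tsum_nat_add n (summable_Po lam)
  rw [tsum_Po] at h
  linarith

lemma F_le_one {lam : ℝ} (hlam : 0 ≤ lam) (n : ℕ) :
    ∑ r ∈ Finset.range n, Po r lam ≤ 1 := by
  have h := tail_Po lam n
  have h0 : 0 ≤ ∑' k : ℕ, Po (k + n) lam := tsum_nonneg fun k => Po_nonneg hlam _
  linarith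

lemma po_term {lam : ℝ} (hlam : 0 ≤ lam) (n m : ℕ) (h : n ≤ m) :
    ((n : ℝ) + 1) * Po (m + 1) lam ≤ lam * Po m lam := by
  have hfac : (0 : ℝ) < (Nat.factorial m : ℝ) := by exact_mod_cast m.factorial_pos
  have h2 : ((n : ℝ) + 1) ≤ (m : ℝ) + 1 := by
    have : n + 1 ≤ m + 1 := by omega
    exact_mod_cast this
  rw [Po, Po, Nat.factorial_succ, pow_succ]
  push_cast
  rw [← mul_div_assoc, ← mul_div_assoc]
  rw [div_le_div_iff₀ (by positivity) hfac]
  calc ((n : ℝ) + 1) * (lam ^ m * lam * Real.exp (-lam)) * (Nat.factorial m : ℝ)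
      ≤ ((m : ℝ) + 1) * (lam ^ m * lam * Real.exp (-lam)) * (Nat.factorial m : ℝ) := by
        have hE : (0 : ℝ) ≤ lam ^ m * lam * Real.exp (-lam) := by positivity
        exact mul_le_mul_of_nonneg_right (mul_le_mul_of_nonneg_right h2 hE) hfac.le
    _ = lam * (lam ^ m * Real.exp (-lam)) * (((m : ℝ) + 1) * (Nat.factorial m : ℝ)) := by
        ring

lemma key_ineq {lam : ℝ} (hlam : 0 ≤ lam) (n : ℕ) :
    ((n : ℝ) + 1) * (1 - ∑ r ∈ Finset.range (n + 2), Po r lam)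
      ≤ lam * (1 - ∑ r ∈ Finset.range (n + 1), Po r lam) := by
  rw [← tail_Po, ← tail_Po, ← tsum_mul_left, ← tsum_mul_left]
  refine Summable.tsum_le_tsum (fun k => ?_)
    (((summable_nat_add_iff (n + 2)).mpr (summable_Po lam)).mul_left _)
    (((summable_nat_add_iff (n + 1)).mpr (summable_Po lam)).mul_left _)
  have hm1 : k + (n + 2) = (k + n + 1) + 1 := by omega
  have hm2 : k + (n + 1) = k + n + 1 := by omega
  rw [hm1, hm2]
  exact po_term hlam n (k + n + 1) (by omega)

lemma PoSet_singleton (i : ℕ) (lam : ℝ) : PoSet {i} lam = Po i lam := by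
  rw [PoSet]; exact tsum_singleton i fun k => Po k lam

lemma PoSet_Iic (lam : ℝ) (n : ℕ) :
    PoSet (Set.Iic n) lam = ∑ r ∈ Finset.range (n + 1), Po r lam := by
  rw [PoSet]
  have h : (Set.Iic n : Set ℕ) = ↑(Finset.range (n + 1)) := by
    ext x; simp [Nat.lt_succ_iff]
  rw [h]
  exact (Finset.range (n + 1)).tsum_subtype fun k => Po k lam

lemma ind_self (i : ℕ) : Set.indicator ({i} : Set ℕ) (fun _ => (1 : ℝ)) i = 1 := by simp

lemma ind_ne {i j : ℕ} (h : j ≠ i) :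
    Set.indicator ({i} : Set ℕ) (fun _ => (1 : ℝ)) j = 0 := by
  simp [Set.indicator_apply, h]

lemma steinChen_succ {lam : ℝ} (hlam : lam ≠ 0) (j : ℕ) (A : Set ℕ) :
    lam * steinChen (j + 1) lam A
      = (j : ℝ) * steinChen j lam A + A.indicator (fun _ => (1 : ℝ)) j - PoSet A lam := by
  have h : steinChen (j + 1) lam A
      = lam⁻¹ * ((j : ℝ) * steinChen j lam A
          + A.indicator (fun _ => (1 : ℝ)) j - PoSet A lam) := by
    rw [steinChen]; simp [hlam]
  rw [h, ← mul_assoc, mul_inv_cancel₀ hlam, one_mul]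

lemma factorial_cast_ne (n : ℕ) : ((Nat.factorial n : ℝ)) ≠ 0 := by
  exact_mod_cast n.factorial_pos.ne'

lemma L1 {lam : ℝ} (hlam : lam ≠ 0) (i : ℕ) : ∀ j m : ℕ, j + m + 1 = i →
    lam * steinChen (j + 1) lam {i}
      = -((Nat.factorial j : ℝ) * lam ^ (m + 1) / (Nat.factorial i))
          * ∑ r ∈ Finset.range (j + 1), Po r lam := by
  intro j
  induction j with
  | zero =>
    intro m hm
    subst hm
    rw [steinChen_succ hlam, PoSet_singleton, ind_ne (show (0 : ℕ) ≠ 0 + m + 1 by omega)]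
    simp only [steinChen, Nat.cast_zero, zero_mul, zero_add, Finset.sum_range_one]
    rw [Po, Po]
    have h1 := factorial_cast_ne (0 + m + 1)
    field_simp
    try ring
  | succ j ih =>
    intro m hm
    have hj : j + (m + 1) + 1 = i := by omega
    have h1 := ih (m + 1) hj
    subst hm
    rw [steinChen_succ hlam, PoSet_singleton,
      ind_ne (show (j + 1 : ℕ) ≠ j + 1 + m + 1 by omega)]
    push_cast
    have hs : ((j : ℝ) + 1) * steinChen (j + 1) lam {j + 1 + m + 1}
        = ((j : ℝ) + 1) * lam⁻¹ * (lam * steinChen (j + 1) lam {j + 1 + m + 1}) := by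
      field_simp
    rw [hs, h1, Finset.sum_range_succ (n := j + 1)]
    rw [Po, Po, Nat.factorial_succ j]
    have h2 := factorial_cast_ne (j + 1 + m + 1)
    have h3 := factorial_cast_ne j
    push_cast
    field_simp
    try ring

lemma L2 {lam : ℝ} (hlam : lam ≠ 0) (i : ℕ) : ∀ m : ℕ,
    lam * steinChen (i + m + 1) lam {i} * lam ^ m
      = ((Nat.factorial (i + m) : ℝ) / (Nat.factorial i))
          * (1 - ∑ r ∈ Finset.range (i + m + 1), Po r lam) := by
  intro m
  induction m with
  | zero =>
    simp only [Nat.add_zero, pow_zero, mul_one, div_self (factorial_cast_ne i), one_mul]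
    rw [steinChen_succ hlam, PoSet_singleton, ind_self]
    cases i with
    | zero =>
      simp [steinChen, Finset.sum_range_one]
      try ring
    | succ k =>
      have h1 := L1 hlam (k + 1) k 0 (by omega)
      have hs : ((k : ℝ) + 1) * steinChen (k + 1) lam {k + 1}
          = ((k : ℝ) + 1) * lam⁻¹ * (lam * steinChen (k + 1) lam {k + 1}) := by
        field_simp
      push_cast
      rw [hs, h1, Finset.sum_range_succ (n := k + 1)]
      rw [Nat.factorial_succ k]
      have h2 := factorial_cast_ne (k + 1)
      have h3 := factorial_cast_ne k
      push_cast
      field_simp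
      try ring
  | succ m ih =>
    have key : lam * steinChen (i + (m + 1) + 1) lam {i}
        = ((i : ℝ) + m + 1) * steinChen (i + m + 1) lam {i} - Po i lam := by
      rw [show i + (m + 1) + 1 = (i + m + 1) + 1 from by omega, steinChen_succ hlam,
        PoSet_singleton, ind_ne (show (i + m + 1 : ℕ) ≠ i by omega)]
      push_cast
      ring
    rw [key]
    have e1 : (((i : ℝ) + m + 1) * steinChen (i + m + 1) lam {i} - Po i lam) * lam ^ (m + 1)
        = ((i : ℝ) + m + 1) * (lam * steinChen (i + m + 1) lam {i} * lam ^ m)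
          - Po i lam * lam ^ (m + 1) := by ring
    rw [e1, ih]
    rw [show i + (m + 1) = (i + m) + 1 from by omega, Nat.factorial_succ (i + m),
      show (i + m) + 1 + 1 = (i + m + 1) + 1 from by omega,
      Finset.sum_range_succ (n := i + m + 1), Po, Po]
    have hfs : ((Nat.factorial (i + m + 1) : ℝ)) = ((i : ℝ) + m + 1) * (Nat.factorial (i + m)) := by
      rw [Nat.factorial_succ (i + m)]; push_cast; ring
    rw [hfs]
    have h2 := factorial_cast_ne i
    have h3 := factorial_cast_ne (i + m)
    have h4 := factorial_cast_ne (i + m + 1)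
    push_cast
    field_simp
    try ring

lemma Po_zero_lam (k : ℕ) : Po k 0 = if k = 0 then 1 else 0 := by
  rcases k with _ | k
  · simp [Po]
  · simp [Po, zero_pow (Nat.succ_ne_zero k)]

/-- For lam ≥ 0: lam * g(j,lam,{i}) ≥ 0 for j > i, the map j ↦ lam * g(j,lam,{i}) is
decreasing for j > i, and lam * g(j,lam,{j-1}) = 1 - Po({0,...,j-1};lam) for j ≥ 1. -/
theorem steinChen_singleton_ge (lam : ℝ) (hlam : 0 ≤ lam) (i : ℕ) :
    (∀ j : ℕ, i < j → 0 ≤ lam * steinChen j lam {i}) ∧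
    (∀ j : ℕ, i < j → lam * steinChen (j + 1) lam {i} ≤ lam * steinChen j lam {i}) ∧
    (∀ j : ℕ, 1 ≤ j →
      lam * steinChen j lam {j - 1} = 1 - PoSet (Set.Iic (j - 1)) lam) := by
  rcases eq_or_lt_of_le hlam with hlam0 | hpos
  · -- lam = 0
    subst hlam0
    refine ⟨fun j _ => by simp, fun j _ => by simp, fun j hj => ?_⟩
    rw [zero_mul, PoSet_Iic]
    have hsum : ∑ r ∈ Finset.range (j - 1 + 1), Po r 0 = 1 := by
      rw [Finset.sum_congr rfl fun r _ => Po_zero_lam r]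
      simp
    rw [hsum]; ring
  · have hne : lam ≠ 0 := ne_of_gt hpos
    refine ⟨?_, ?_, ?_⟩
    · intro j hj
      obtain ⟨m, rfl⟩ : ∃ m, j = i + m + 1 := ⟨j - i - 1, by omega⟩
      have h2 := L2 hne i m
      have hpow : (0 : ℝ) < lam ^ m := pow_pos hpos m
      have hR : 0 ≤ ((Nat.factorial (i + m) : ℝ) / (Nat.factorial i))
          * (1 - ∑ r ∈ Finset.range (i + m + 1), Po r lam) := by
        have hF := F_le_one hlam (i + m + 1)
        have hq : (0:ℝ) ≤ (Nat.factorial (i + m) : ℝ) / (Nat.factorial i) := by positivity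
        nlinarith
      rw [← h2] at hR
      exact le_of_mul_le_mul_right (by rw [zero_mul]; exact hR) hpow
    · intro j hj
      obtain ⟨m, rfl⟩ : ∃ m, j = i + m + 1 := ⟨j - i - 1, by omega⟩
      have hpow : (0 : ℝ) < lam ^ (m + 1) := pow_pos hpos (m + 1)
      apply le_of_mul_le_mul_right ?_ hpow
      have hL := L2 hne i (m + 1)
      have hR := L2 hne i m
      rw [show i + m + 1 + 1 = i + (m + 1) + 1 from by omega, hL]
      have e : lam * steinChen (i + m + 1) lam {i} * lam ^ (m + 1)
          = (lam * steinChen (i + m + 1) lam {i} * lam ^ m) * lam := by ring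
      rw [e, hR]
      have hfac : (0 : ℝ) ≤ (Nat.factorial (i + m) : ℝ) / (Nat.factorial i) := by positivity
      have hA : ((Nat.factorial (i + (m + 1)) : ℝ)) / (Nat.factorial i)
          = ((i : ℝ) + m + 1) * ((Nat.factorial (i + m) : ℝ) / (Nat.factorial i)) := by
        rw [show i + (m + 1) = (i + m) + 1 from by omega, Nat.factorial_succ (i + m)]
        push_cast
        ring
      rw [hA, show i + (m + 1) + 1 = (i + m) + 2 from by omega,
        show i + m + 1 = (i + m) + 1 from by omega]
      have hk := key_ineq hlam (i + m)
      push_cast at hk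
      have final := mul_le_mul_of_nonneg_left hk hfac
      linarith [final]
    · intro j hj
      obtain ⟨i', rfl⟩ : ∃ i', j = i' + 1 := ⟨j - 1, by omega⟩
      have hsub : i' + 1 - 1 = i' := by omega
      rw [hsub, PoSet_Iic]
      have h2 := L2 hne i' 0
      simp only [Nat.add_zero, pow_zero, mul_one, div_self (factorial_cast_ne i'),
        one_mul] at h2
      exact h2
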